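/- (Generalized Snell's law via Lagrange multipliers.) Let φ : ℝ³ → ℝ be C¹ and ψ : ℝ³ → ℝ be differentiable, let n₁, n₂ > 0, and let A, B, P ∈ ℝ³ with P ≠ A, P ≠ B, φ(P) = 0 and ∇φ(P) ≠ 0. If P is a local extremum of the function Q ↦ n₁ |Q − A| + n₂ |B − Q| − ψ(Q) restricted to the level surface { Q : φ(Q) = 0 }, then, setting 𝐱 = (P − A)/|P − A| and 𝐦 = (B − P)/|B − P|, the vector n₁𝐱 − n₂𝐦 − ∇ψ(P) is parallel to ∇φ(P); equivalently, (n₁𝐱 − n₂𝐦 − ∇ψ(P)) × ∇φ(P) = 0, where × is the cross product in ℝ³. -/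

import Mathlib

open InnerProductSpace Filter

lemma hasFDerivAt_norm_of_ne' {E : Type*} [NormedAddCommGroup E] [InnerProductSpace ℝ E]
    {x : E} (hx : x ≠ 0) :
    HasFDerivAt (fun y : E => ‖y‖) (‖x‖⁻¹ • innerSL ℝ x) x := by
  have h2 : HasFDerivAt (fun y : E => ‖y‖ ^ 2) (2 • innerSL ℝ x) x :=
    (hasStrictFDerivAt_norm_sq x).hasFDerivAt
  have h3 : (‖x‖ : ℝ) ^ 2 ≠ 0 := pow_ne_zero _ (norm_ne_zero_iff.2 hx)
  have h4 := h2.sqrt h3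
  have h5 : (fun y : E => Real.sqrt (‖y‖ ^ 2)) = fun y : E => ‖y‖ := by
    funext y; rw [Real.sqrt_sq (norm_nonneg y)]
  rw [h5] at h4
  convert h4 using 1
  rw [Real.sqrt_sq (norm_nonneg x)]
  ext y
  have hn : (‖x‖ : ℝ) ≠ 0 := norm_ne_zero_iff.2 hx
  simp only [ContinuousLinearMap.smul_apply, ContinuousLinearMap.coe_smul', Pi.smul_apply,
    smul_eq_mul]
  rw [two_smul]
  simp only [ContinuousLinearMap.add_apply, innerSL_apply_apply, smul_eq_mul]
  field_simp
  ring

local notation "E3" => EuclideanSpace ℝ (Fin 3)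

set_option maxHeartbeats 1600000 in
/-- Generalized Snell's law via Lagrange multipliers: if `P` (with
`φ(P) = 0`, `∇φ(P) ≠ 0`) is a local extremum of
`Q ↦ n₁|Q − A| + n₂|B − Q| − ψ(Q)` restricted to the level surface `{φ = 0}`, then,
with `𝐱 = (P − A)/|P − A|` and `𝐦 = (B − P)/|B − P|`, the vector
`n₁𝐱 − n₂𝐦 − ∇ψ(P)` is parallel to `∇φ(P)`: there exists `λ ∈ ℝ` with
`n₁𝐱 − n₂𝐦 − ∇ψ(P) = λ∇φ(P)` (equivalently, their cross product vanishes). -/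
theorem generalized_snell_law
    (φ ψ : EuclideanSpace ℝ (Fin 3) → ℝ)
    (hφ : ContDiff ℝ 1 φ) (hψ : Differentiable ℝ ψ)
    (n₁ n₂ : ℝ) (hn₁ : 0 < n₁) (hn₂ : 0 < n₂)
    (A B P : EuclideanSpace ℝ (Fin 3))
    (hPA : P ≠ A) (hPB : P ≠ B)
    (hP : φ P = 0) (hgradφ : gradient φ P ≠ 0)
    (hext : IsLocalExtrOn
      (fun Q => n₁ * ‖Q - A‖ + n₂ * ‖B - Q‖ - ψ Q) {Q | φ Q = 0} P) :
    ∃ l : ℝ,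
      n₁ • (‖P - A‖⁻¹ • (P - A)) - n₂ • (‖B - P‖⁻¹ • (B - P)) - gradient ψ P
        = l • gradient φ P := by
  have hu : P - A ≠ 0 := sub_ne_zero.2 hPA
  have hv : B - P ≠ 0 := sub_ne_zero.2 hPB.symm
  -- constraint derivative
  have hφs : HasStrictFDerivAt φ (fderiv ℝ φ P) P :=
    hφ.contDiffAt.hasStrictFDerivAt one_ne_zero
  set f' : E3 →L[ℝ] ℝ := fderiv ℝ φ P with hf'def
  have hgradf : InnerProductSpace.toDual ℝ E3 (gradient φ P) = f' := by
    rw [gradient]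
    exact (InnerProductSpace.toDual ℝ E3).apply_symm_apply _
  have hf'ne : f' ≠ 0 := by
    intro h
    apply hgradφ
    have : gradient φ P = (InnerProductSpace.toDual ℝ E3).symm f' := by
      rw [gradient]
    rw [this, h, map_zero]
  obtain ⟨v₀, hv₀⟩ : ∃ v : E3, f' v ≠ 0 := by
    by_contra h
    push_neg at h
    exact hf'ne (ContinuousLinearMap.ext fun y => by simpa using h y)
  have hrange : f'.range = ⊤ := LinearMap.range_eq_top.2 fun c =>
    ⟨(c / f' v₀) • v₀, by rw [ContinuousLinearMap.coe_coe, map_smul]; simp [smul_eq_mul]; field_simp⟩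
  -- implicit function
  set g := hφs.implicitFunction φ f' hrange 0 with hgdef
  have hg0 : g 0 = P := by
    have := hφs.implicitFunction_apply_image (f := φ) (f' := f') hrange
    rw [hP] at this
    exact this
  have hgd : HasStrictFDerivAt g (Submodule.subtypeL (f'.ker)) 0 := by
    have := hφs.to_implicitFunction (f := φ) (f' := f') hrange
    rw [hP] at this
    exact this
  have hmem : ∀ᶠ y : (f'.ker : Submodule ℝ E3) in nhds 0, φ (g y) = 0 := by
    have h1 := hφs.map_implicitFunction_eq (f := φ) (f' := f') hrange
    rw [hP] at h1
    have h2 : Tendsto (fun y : (f'.ker : Submodule ℝ E3) => ((0 : ℝ), y))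
        (nhds 0) (nhds ((0 : ℝ), (0 : (f'.ker : Submodule ℝ E3)))) :=
      tendsto_const_nhds.prodMk_nhds tendsto_id
    exact h2.eventually h1
  -- objective derivative
  have hnA : HasFDerivAt (fun Q : E3 => ‖Q - A‖) (‖P - A‖⁻¹ • innerSL ℝ (P - A)) P := by
    have h1 : HasFDerivAt (fun Q : E3 => Q - A) (ContinuousLinearMap.id ℝ E3) P :=
      (hasFDerivAt_id P).sub_const A
    have := (hasFDerivAt_norm_of_ne' hu).comp P h1
    rw [ContinuousLinearMap.comp_id] at this
    exact this
  have hnB : HasFDerivAt (fun Q : E3 => ‖B - Q‖) (-(‖B - P‖⁻¹ • innerSL ℝ (B - P))) P := by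
    have h1 : HasFDerivAt (fun Q : E3 => B - Q) (-(ContinuousLinearMap.id ℝ E3)) P :=
      (hasFDerivAt_id P).const_sub B
    have h2 : (-(‖B - P‖⁻¹ • innerSL ℝ (B - P)))
        = (‖B - P‖⁻¹ • innerSL ℝ (B - P)).comp (-(ContinuousLinearMap.id ℝ E3)) := by
      ext y; simp
    rw [h2]
    exact (hasFDerivAt_norm_of_ne' hv).comp P h1
  have hψd : HasFDerivAt ψ (fderiv ℝ ψ P) P := (hψ P).hasFDerivAt
  set D : E3 →L[ℝ] ℝ :=
    n₁ • (‖P - A‖⁻¹ • innerSL ℝ (P - A)) + n₂ • -(‖B - P‖⁻¹ • innerSL ℝ (B - P))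
      - fderiv ℝ ψ P with hDdef
  have hΦ : HasFDerivAt (fun Q : E3 => n₁ * ‖Q - A‖ + n₂ * ‖B - Q‖ - ψ Q) D P :=
    ((hnA.const_mul n₁).add (hnB.const_mul n₂)).sub hψd
  -- composite extremum
  have hΦ' : HasFDerivAt (fun Q : E3 => n₁ * ‖Q - A‖ + n₂ * ‖B - Q‖ - ψ Q) D (g 0) := by
    rw [hg0]; exact hΦ
  have hcomp : HasFDerivAt ((fun Q : E3 => n₁ * ‖Q - A‖ + n₂ * ‖B - Q‖ - ψ Q) ∘ g)
      (D.comp (Submodule.subtypeL (f'.ker))) 0 :=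
    hΦ'.comp 0 hgd.hasFDerivAt
  have htend : Tendsto g (nhds 0) (nhdsWithin P {Q : E3 | φ Q = 0}) := by
    rw [tendsto_nhdsWithin_iff]
    constructor
    · have := hgd.hasFDerivAt.continuousAt.tendsto
      rwa [hg0] at this
    · exact hmem
  have hextr : IsLocalExtr ((fun Q : E3 => n₁ * ‖Q - A‖ + n₂ * ‖B - Q‖ - ψ Q) ∘ g) 0 := by
    rw [← hg0] at hext htend
    exact hext.comp_tendsto htend
  have hD0 : D.comp (Submodule.subtypeL (f'.ker)) = 0 :=
    hextr.hasFDerivAt_eq_zero hcomp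
  have hker : ∀ y : E3, y ∈ f'.ker → D y = 0 := by
    intro y hy
    have := ContinuousLinearMap.ext_iff.1 hD0 ⟨y, hy⟩
    simpa using this
  -- multiplier
  refine ⟨D v₀ / f' v₀, ?_⟩
  have hDlf : D = (D v₀ / f' v₀) • f' := by
    ext x
    have hmemk : x - (f' x / f' v₀) • v₀ ∈ f'.ker := by
      rw [LinearMap.mem_ker]
      simp only [ContinuousLinearMap.coe_coe, map_sub, map_smul, smul_eq_mul]
      field_simp
      ring
    have h0 := hker _ hmemk
    simp only [map_sub, map_smul, smul_eq_mul, sub_eq_zero] at h0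
    rw [ContinuousLinearMap.smul_apply, smul_eq_mul, h0]
    field_simp
  apply (InnerProductSpace.toDual ℝ E3).injective
  rw [map_smul, hgradf]
  have hgradψ : InnerProductSpace.toDual ℝ E3 (gradient ψ P) = fderiv ℝ ψ P := by
    rw [gradient]
    exact (InnerProductSpace.toDual ℝ E3).apply_symm_apply _
  rw [map_sub, map_sub, map_smul, map_smul, map_smul, map_smul, hgradψ]
  rw [← hDlf, hDdef]
  have htd1 : InnerProductSpace.toDual ℝ E3 (P - A) = innerSL ℝ (P - A) := by
    refine ContinuousLinearMap.ext fun y => ?_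
    rw [InnerProductSpace.toDual_apply_apply, innerSL_apply_apply]
  have htd2 : InnerProductSpace.toDual ℝ E3 (B - P) = innerSL ℝ (B - P) := by
    refine ContinuousLinearMap.ext fun y => ?_
    rw [InnerProductSpace.toDual_apply_apply, innerSL_apply_apply]
  rw [htd1, htd2]
  module
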